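/- Let H be a finite simple graph and construct the graph G as follows: V(G) = V(H) ∪ {v₀} where v₀ ∉ V(H); two distinct vertices u, w ∈ V(H) are adjacent in G iff they are not adjacent in H; and v₀ is adjacent in G to every vertex of V(H). Place one pebble on each vertex of V(H) (i.e., σ is a bijection from the pebble set P onto V(H)). Then the minimum, over all solutions μ : P → V(G) whose image μ[P] is a clique of G, of the total movement Σ_{p∈P} d_G(σ(p), μ(p)) equals the minimum size of a vertex cover of H. (This is the correctness of the reduction from minimum vertex cover used in the inapproximability proof for the clique movement problem with total-movement objective.) -/

import Mathlib

/-- The graph `G` built from a finite simple graph `H` by complementing the edges of `H`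
and adding a universal vertex `v₀` (modelled as `none : Option V`). -/
def gadgetGraph {V : Type*} (H : SimpleGraph V) : SimpleGraph (Option V) where
  Adj a b :=
    match a, b with
    | some u, some w => u ≠ w ∧ ¬ H.Adj u w
    | some _, none => True
    | none, some _ => True
    | none, none => False
  symm := by
    constructor
    rintro (_ | u) (_ | w) h
    · exact h
    · trivial
    · trivial
    · exact ⟨h.1.symm, fun hadj => h.2 hadj.symm⟩
  loopless := by
    constructor
    rintro (_ | u) h
    · exact h
    · exact h.1 rfl

lemma gadget_adj_none {V : Type*} (H : SimpleGraph V) (v : V) :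
    (gadgetGraph H).Adj (some v) none := trivial

lemma gadget_reachable {V : Type*} (H : SimpleGraph V) (v : V) (x : Option V) :
    (gadgetGraph H).Reachable (some v) x := by
  cases x with
  | none => exact (gadget_adj_none H v).reachable
  | some w =>
    exact ((gadget_adj_none H v).reachable).trans ((gadget_adj_none H w).symm.reachable)

/-- Placing one pebble on each vertex of `H` inside `gadgetGraph H`, the minimum total
movement over solutions whose image is a clique equals the minimum size of a vertex cover
of `H`. -/
theorem stmt_9 {V : Type*} [Fintype V] (H : SimpleGraph V) :
    sInf {n : ℕ | ∃ μ : V → Option V, (gadgetGraph H).IsClique (Set.range μ) ∧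
        n = ∑ v : V, (gadgetGraph H).dist (some v) (μ v)} =
      sInf {n : ℕ | ∃ C : Set V, (∀ u w : V, H.Adj u w → u ∈ C ∨ w ∈ C) ∧ n = C.ncard} := by
  classical
  set S := {n : ℕ | ∃ μ : V → Option V, (gadgetGraph H).IsClique (Set.range μ) ∧
      n = ∑ v : V, (gadgetGraph H).dist (some v) (μ v)} with hS
  set T := {n : ℕ | ∃ C : Set V, (∀ u w : V, H.Adj u w → u ∈ C ∨ w ∈ C) ∧ n = C.ncard} with hT
  have hSne : S.Nonempty := by
    refine ⟨_, (fun _ => none), ?_, rfl⟩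
    rintro x ⟨a, rfl⟩ y ⟨b, rfl⟩ h
    exact absurd rfl h
  have hTne : T.Nonempty := ⟨_, Set.univ, fun u w _ => Or.inl trivial, rfl⟩
  apply le_antisymm
  · -- from a cover build a solution of equal cost
    obtain ⟨C, hcov, hcard⟩ := Nat.sInf_mem hTne
    refine le_trans (Nat.sInf_le ?_) (le_of_eq hcard.symm)
    refine ⟨fun v => if v ∈ C then none else some v, ?_, ?_⟩
    · rintro x ⟨a, rfl⟩ y ⟨b, rfl⟩ hxy
      by_cases ha : a ∈ C <;> by_cases hb : b ∈ C <;>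
        simp only [ha, hb, if_pos, if_neg, if_true, if_false] at hxy ⊢
      · exact absurd rfl hxy
      · exact ((gadget_adj_none H b).symm)
      · exact gadget_adj_none H a
      · have hab : a ≠ b := fun h => hxy (by rw [h])
        refine ⟨hab, fun hadj => ?_⟩
        rcases hcov a b hadj with h | h
        · exact ha h
        · exact hb h
    · have : ∀ v : V, (gadgetGraph H).dist (some v) (if v ∈ C then none else some v)
          = if v ∈ C then 1 else 0 := by
        intro v
        by_cases hv : v ∈ C <;> simp only [hv, if_true, if_false]
        · exact SimpleGraph.dist_eq_one_iff_adj.mpr (gadget_adj_none H v)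
        · exact SimpleGraph.dist_self
      rw [Finset.sum_congr rfl (fun v _ => this v), Set.ncard_eq_toFinset_card',
        Set.toFinset_card, Fintype.card_subtype, Finset.card_filter]
  · -- from a solution build a cover of no larger cost
    obtain ⟨μ, hclique, hsum⟩ := Nat.sInf_mem hSne
    set C : Set V := {v | μ v ≠ some v} with hC
    have hcov : ∀ u w : V, H.Adj u w → u ∈ C ∨ w ∈ C := by
      intro u w hadj
      by_contra hcon
      push_neg at hcon
      obtain ⟨hu, hw⟩ := hcon
      simp only [hC, Set.mem_setOf_eq, not_not] at hu hw
      have huw : u ≠ w := hadj.ne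
      have := hclique (Set.mem_range_self u) (Set.mem_range_self w)
        (by rw [hu, hw]; exact fun h => huw (Option.some_injective V h))
      rw [hu, hw] at this
      exact this.2 hadj
    have hle : C.ncard ≤ sInf S := by
      rw [hsum]
      have : C.ncard = ∑ v : V, (if μ v ≠ some v then 1 else 0) := by
        rw [Set.ncard_eq_toFinset_card', Set.toFinset_card,
          Fintype.card_subtype, Finset.card_filter]
        simp only [hC, Set.mem_setOf_eq]
      rw [this]
      apply Finset.sum_le_sum
      intro v _
      by_cases hv : μ v = some v
      · simp [hv]
      · simp only [hv, ne_eq, not_false_iff, if_true]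
        exact Nat.one_le_iff_ne_zero.mpr
          (((gadget_reachable H v (μ v)).dist_eq_zero_iff).ne.mpr (fun h => hv h.symm))
    exact le_trans (Nat.sInf_le ⟨C, hcov, rfl⟩) hle
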